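/- Let S be a connected colorful graph, let e* ∈ E(S), and let H be a colored graph on color set V(S) that is not surjectively S-colored. Then the number of color-preserving homomorphisms from H to the CFI graph Γ(S, χ_∅) equals the number of color-preserving homomorphisms from H to the CFI graph Γ(S, χ_{e*}), i.e., hom(H, Γ(S, χ_∅)) = hom(H, Γ(S, χ_{e*})). -/

import Mathlib

open SimpleGraph

/-- Color-preserving homomorphism count between colored graphs. -/
noncomputable def cpHomCount {VH VG C : Type} (H : SimpleGraph VH) (cH : VH → C)
    (G : SimpleGraph VG) (cG : VG → C) : ℕ :=
  Nat.card {f : H →g G // ∀ v, cG (f v) = cH v}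

variable {V : Type} [Fintype V] [DecidableEq V]

/-- Vertices of the CFI graph over a colorful graph `S`: pairs of a color `v ∈ V(S)`
and an even assignment on the edges incident to `v` (encoded as a function on all of
`Sym2 V` supported on the incidence set of `v`). -/
def CFIVert (S : SimpleGraph V) : Type :=
  Σ v : V, {a : Sym2 V → ZMod 2 //
    (∀ e, a e ≠ 0 → e ∈ S.incidenceSet v) ∧ ∑ e : Sym2 V, a e = 0}

/-- The CFI graph of a colorful graph `S` with charge function `c`: vertices
`(u, a_u)` and `(v, a_v)` are adjacent iff `uv ∈ E(S)` and
`a_u(uv) + a_v(uv) = c(uv)`.  Its coloring is `Sigma.fst : CFIVert S → V`. -/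
def CFI (S : SimpleGraph V) (c : Sym2 V → ZMod 2) : SimpleGraph (CFIVert S) where
  Adj x y := S.Adj x.1 y.1 ∧ x.2.1 s(x.1, y.1) + y.2.1 s(x.1, y.1) = c s(x.1, y.1)
  symm := by
    constructor
    rintro ⟨u, a⟩ ⟨v, b⟩ ⟨hadj, hsum⟩
    refine ⟨hadj.symm, ?_⟩
    simp only [Sym2.eq_swap (a := v) (b := u)]
    rw [add_comm]; exact hsum
  loopless := ⟨fun x h => S.loopless.irrefl _ h.1⟩

private lemma z2_self (a : ZMod 2) : a + a = 0 := by revert a; decide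

/-- Two charge functions agreeing on all color-pairs of `H`-edges yield the same count. -/
private lemma cpHom_congr {VH : Type} (S : SimpleGraph V) (H : SimpleGraph VH) (cH : VH → V)
    (c c' : Sym2 V → ZMod 2)
    (hagree : ∀ u v, H.Adj u v → c s(cH u, cH v) = c' s(cH u, cH v)) :
    cpHomCount H cH (CFI S c) Sigma.fst = cpHomCount H cH (CFI S c') Sigma.fst := by
  unfold cpHomCount
  apply Nat.card_congr
  have key : ∀ (c c' : Sym2 V → ZMod 2),
      (∀ u v, H.Adj u v → c s(cH u, cH v) = c' s(cH u, cH v)) →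
      ∀ (f : H →g CFI S c), (∀ v, (f v).1 = cH v) →
      ∀ a b, H.Adj a b → (CFI S c').Adj (f a) (f b) := by
    intro c c' hag f hf a b hab
    obtain ⟨hS, hsum⟩ := f.map_rel hab
    refine ⟨hS, ?_⟩
    have hcc : c' s((f a).1, (f b).1) = c s((f a).1, (f b).1) := by
      rw [hf a, hf b]; exact (hag a b hab).symm
    rw [hcc]; exact hsum
  exact ⟨fun p => ⟨⟨p.1, fun hab => key c c' hagree p.1 p.2 _ _ hab⟩, p.2⟩,
    fun p => ⟨⟨p.1, fun hab => key c' c (fun u v h => (hagree u v h).symm) p.1 p.2 _ _ hab⟩, p.2⟩,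
    fun p => rfl, fun p => rfl⟩

/-- The twist map on CFI vertices: add `d` to the local assignment at vertices of color `w`. -/
private def twistV (S : SimpleGraph V) (w : V) (d : Sym2 V → ZMod 2)
    (hsupp : ∀ e, d e ≠ 0 → e ∈ S.incidenceSet w)
    (hsum : ∑ e : Sym2 V, d e = 0) : CFIVert S → CFIVert S :=
  fun x =>
    if h : x.1 = w then
      ⟨x.1, ⟨fun e => x.2.1 e + d e,
        fun e he => by
          rcases eq_or_ne (x.2.1 e) 0 with h0 | h0
          · have hd : d e ≠ 0 := fun hd =>
              he (show x.2.1 e + d e = 0 by rw [h0, hd, add_zero])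
            rw [h]; exact hsupp e hd
          · exact x.2.2.1 e h0,
        show ∑ e : Sym2 V, (x.2.1 e + d e) = 0 by
          rw [Finset.sum_add_distrib, x.2.2.2, hsum, add_zero]⟩⟩
    else x

private lemma twistV_fst (S : SimpleGraph V) (w : V) (d : Sym2 V → ZMod 2)
    (hsupp : ∀ e, d e ≠ 0 → e ∈ S.incidenceSet w) (hsum : ∑ e : Sym2 V, d e = 0)
    (x : CFIVert S) : (twistV S w d hsupp hsum x).1 = x.1 := by
  unfold twistV; by_cases h : x.1 = w <;> simp [h]

private lemma twistV_snd (S : SimpleGraph V) (w : V) (d : Sym2 V → ZMod 2)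
    (hsupp : ∀ e, d e ≠ 0 → e ∈ S.incidenceSet w) (hsum : ∑ e : Sym2 V, d e = 0)
    (x : CFIVert S) (e : Sym2 V) :
    (twistV S w d hsupp hsum x).2.1 e = x.2.1 e + (if x.1 = w then d e else 0) := by
  by_cases h : x.1 = w
  · rw [if_pos h]
    rw [show twistV S w d hsupp hsum x = _ from dif_pos h]
  · rw [if_neg h, add_zero]
    rw [show twistV S w d hsupp hsum x = _ from dif_neg h]

private lemma twistV_invol (S : SimpleGraph V) (w : V) (d : Sym2 V → ZMod 2)
    (hsupp : ∀ e, d e ≠ 0 → e ∈ S.incidenceSet w) (hsum : ∑ e : Sym2 V, d e = 0)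
    (x : CFIVert S) : twistV S w d hsupp hsum (twistV S w d hsupp hsum x) = x := by
  have h1 := twistV_fst S w d hsupp hsum (twistV S w d hsupp hsum x)
  have h2 := twistV_fst S w d hsupp hsum x
  refine Sigma.ext (h1.trans h2) ?_
  refine (Subtype.heq_iff_coe_eq ?_).mpr ?_
  · intro a; rw [h1, h2]
  · funext e
    rw [twistV_snd, twistV_snd, twistV_fst]
    by_cases hw : x.1 = w
    · rw [if_pos hw, add_assoc, z2_self, add_zero]
    · rw [if_neg hw, add_zero, add_zero]

private lemma twist_adj (S : SimpleGraph V) (w : V) (c c' : Sym2 V → ZMod 2)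
    (hsupp : ∀ e, c e ≠ c' e → e ∈ S.incidenceSet w)
    (hd : ∀ e, (fun e => c e + c' e) e ≠ 0 → e ∈ S.incidenceSet w)
    (hs : ∑ e : Sym2 V, (c e + c' e) = 0)
    (x y : CFIVert S) :
    (CFI S c).Adj x y ↔
      (CFI S c').Adj (twistV S w (fun e => c e + c' e) hd hs x)
        (twistV S w (fun e => c e + c' e) hd hs y) := by
  set T := twistV S w (fun e => c e + c' e) hd hs with hT
  have fx := twistV_fst S w (fun e => c e + c' e) hd hs x
  have fy := twistV_fst S w (fun e => c e + c' e) hd hs y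
  constructor
  · rintro ⟨hadj, hsum⟩
    refine ⟨by rw [fx, fy]; exact hadj, ?_⟩
    have hE : s((T x).1, (T y).1) = s(x.1, y.1) := by rw [hT, fx, fy]
    rw [hE, twistV_snd, twistV_snd]
    set e := s(x.1, y.1) with he
    have hne : x.1 ≠ y.1 := hadj.ne
    by_cases hx : x.1 = w
    · have hy : y.1 ≠ w := fun hy => hne (hx.trans hy.symm)
      rw [if_pos hx, if_neg hy]
      simp only [add_zero]
      have : ∀ A B C C' : ZMod 2, A + B = C → A + (C + C') + B = C' := by decide
      exact this (x.2.1 e) (y.2.1 e) (c e) (c' e) hsum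
    · by_cases hy : y.1 = w
      · rw [if_neg hx, if_pos hy]
        simp only [add_zero]
        have : ∀ A B C C' : ZMod 2, A + B = C → A + (B + (C + C')) = C' := by decide
        exact this (x.2.1 e) (y.2.1 e) (c e) (c' e) hsum
      · rw [if_neg hx, if_neg hy]
        simp only [add_zero]
        have hcc : c e = c' e := by
          by_contra hne'
          have := hsupp e hne'
          have hwmem : w ∈ e := this.2
          rw [he, Sym2.mem_iff] at hwmem
          rcases hwmem with h | h
          · exact hx h.symm
          · exact hy h.symm
        rw [← hcc]; exact hsum
  · rintro ⟨hadj, hsum⟩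
    rw [hT, fx, fy] at hadj
    refine ⟨hadj, ?_⟩
    have hE : s((T x).1, (T y).1) = s(x.1, y.1) := by rw [hT, fx, fy]
    rw [hE, twistV_snd, twistV_snd] at hsum
    set e := s(x.1, y.1) with he
    have hne : x.1 ≠ y.1 := hadj.ne
    by_cases hx : x.1 = w
    · have hy : y.1 ≠ w := fun hy => hne (hx.trans hy.symm)
      rw [if_pos hx, if_neg hy] at hsum
      simp only [add_zero] at hsum
      have : ∀ A B C C' : ZMod 2, A + (C + C') + B = C' → A + B = C := by decide
      exact this (x.2.1 e) (y.2.1 e) (c e) (c' e) hsum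
    · by_cases hy : y.1 = w
      · rw [if_neg hx, if_pos hy] at hsum
        simp only [add_zero] at hsum
        have : ∀ A B C C' : ZMod 2, A + (B + (C + C')) = C' → A + B = C := by decide
        exact this (x.2.1 e) (y.2.1 e) (c e) (c' e) hsum
      · rw [if_neg hx, if_neg hy] at hsum
        simp only [add_zero] at hsum
        have hcc : c e = c' e := by
          by_contra hne'
          have := hsupp e hne'
          have hwmem : w ∈ e := this.2
          rw [he, Sym2.mem_iff] at hwmem
          rcases hwmem with h | h
          · exact hx h.symm
          · exact hy h.symm
        rw [hcc]; exact hsum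

/-- Twisting at a single vertex preserves the hom count. -/
private lemma cpHom_twist {VH : Type} (S : SimpleGraph V) (H : SimpleGraph VH) (cH : VH → V)
    (w : V) (c c' : Sym2 V → ZMod 2)
    (hsupp : ∀ e, c e ≠ c' e → e ∈ S.incidenceSet w)
    (hsum : ∑ e : Sym2 V, (c e + c' e) = 0) :
    cpHomCount H cH (CFI S c) Sigma.fst = cpHomCount H cH (CFI S c') Sigma.fst := by
  have hd : ∀ e, (fun e => c e + c' e) e ≠ 0 → e ∈ S.incidenceSet w := by
    intro e hne
    apply hsupp
    intro heq
    exact hne (by simp only [heq, z2_self])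
  set T := twistV S w (fun e => c e + c' e) hd hsum with hT
  have hinv : ∀ x, T (T x) = x := twistV_invol S w _ hd hsum
  have hfst : ∀ x, (T x).1 = x.1 := twistV_fst S w _ hd hsum
  have hadj : ∀ x y, (CFI S c).Adj x y ↔ (CFI S c').Adj (T x) (T y) :=
    twist_adj S w c c' hsupp hd hsum
  unfold cpHomCount
  apply Nat.card_congr
  refine ⟨fun p => ⟨⟨fun v => T (p.1 v), fun hab => (hadj _ _).mp (p.1.map_rel hab)⟩,
      fun v => by show (T (p.1 v)).1 = cH v; rw [hfst]; exact p.2 v⟩,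
    fun p => ⟨⟨fun v => T (p.1 v), fun hab => (hadj _ _).mpr
      (by rw [hinv, hinv]; exact p.1.map_rel hab)⟩,
      fun v => by show (T (p.1 v)).1 = cH v; rw [hfst]; exact p.2 v⟩, ?_, ?_⟩
  · intro p
    refine Subtype.ext (DFunLike.ext _ _ fun v => ?_)
    exact hinv (p.1 v)
  · intro p
    refine Subtype.ext (DFunLike.ext _ _ fun v => ?_)
    exact hinv (p.1 v)

private def chi (e : Sym2 V) : Sym2 V → ZMod 2 := fun f => if f = e then 1 else 0

private lemma sum_chi (e : Sym2 V) : ∑ f : Sym2 V, chi e f = 1 := by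
  simp [chi]

/-- Moving the single charge between two edges sharing a vertex. -/
private lemma cpHom_step {VH : Type} (S : SimpleGraph V) (H : SimpleGraph VH) (cH : VH → V)
    (w : V) (e f : Sym2 V) (hew : e ∈ S.incidenceSet w) (hfw : f ∈ S.incidenceSet w) :
    cpHomCount H cH (CFI S (chi e)) Sigma.fst = cpHomCount H cH (CFI S (chi f)) Sigma.fst := by
  apply cpHom_twist S H cH w
  · intro g hne
    by_cases hge : g = e
    · rw [hge]; exact hew
    · by_cases hgf : g = f
      · rw [hgf]; exact hfw
      · exfalso; apply hne; simp [chi, hge, hgf]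
  · rw [Finset.sum_add_distrib, sum_chi, sum_chi]
    decide

private lemma mem_inc_right {S : SimpleGraph V} {a b : V} (h : S.Adj a b) :
    s(a, b) ∈ S.incidenceSet b :=
  ⟨S.mem_edgeSet.mpr h, by simp⟩

private lemma mem_inc_left {S : SimpleGraph V} {a b : V} (h : S.Adj a b) :
    s(a, b) ∈ S.incidenceSet a :=
  ⟨S.mem_edgeSet.mpr h, by simp⟩

/-- Moving the single charge along a walk. -/
private lemma cpHom_walk {VH : Type} (S : SimpleGraph V) (H : SimpleGraph VH) (cH : VH → V) :
    ∀ {b i : V} (_ : S.Walk b i) (j : V) (_ : S.Adj i j) (a : V) (_ : S.Adj a b),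
      cpHomCount H cH (CFI S (chi s(a, b))) Sigma.fst =
        cpHomCount H cH (CFI S (chi s(i, j))) Sigma.fst := by
  intro b i p
  induction p with
  | nil =>
    intro j hij a hab
    exact cpHom_step S H cH _ _ _ (mem_inc_right hab) (mem_inc_left hij)
  | cons h q ih =>
    intro j hij a hab
    exact (cpHom_step S H cH _ _ _ (mem_inc_right hab) (mem_inc_left h)).trans (ih j hij _ h)

/-- If `H` is a colored graph on color set `V(S)` that is *not* surjectively
`S`-colored, then `H` has equally many color-preserving homomorphisms into the two
CFI graphs `Γ(S, χ_∅)` and `Γ(S, χ_{e*})`, for `S` connected and `e* ∈ E(S)`. -/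
theorem cpHomCount_CFI_eq_of_not_surjectively_colored
    {VH : Type} [Fintype VH]
    (S : SimpleGraph V) [DecidableRel S.Adj] (hconn : S.Connected)
    (estar : Sym2 V) (he : estar ∈ S.edgeSet)
    (H : SimpleGraph VH) (cH : VH → V)
    (hnotsurj : ¬ ((∀ u v, H.Adj u v → S.Adj (cH u) (cH v)) ∧
        (∀ i j, S.Adj i j → ∃ u v, H.Adj u v ∧ cH u = i ∧ cH v = j))) :
    cpHomCount H cH (CFI S (fun _ => 0)) Sigma.fst =
      cpHomCount H cH (CFI S (fun e => if e = estar then 1 else 0)) Sigma.fst := by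
  rw [not_and_or] at hnotsurj
  rcases hnotsurj with hA | hB
  · -- H is not S-colored: both counts are zero
    push_neg at hA
    obtain ⟨u, v, hadj, hnS⟩ := hA
    have h0 : ∀ c : Sym2 V → ZMod 2, cpHomCount H cH (CFI S c) Sigma.fst = 0 := by
      intro c
      have : IsEmpty {f : H →g CFI S c // ∀ v, Sigma.fst (f v) = cH v} := by
        constructor
        rintro ⟨f, hf⟩
        have hS := (f.map_rel hadj).1
        rw [hf u, hf v] at hS
        exact hnS hS
      unfold cpHomCount; rw [Nat.card_of_isEmpty]
    rw [h0, h0]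
  · -- some S-edge is uncovered
    push_neg at hB
    obtain ⟨i, j, hij, hmiss⟩ := hB
    -- express estar as s(x, y)
    induction estar using Sym2.ind with
    | _ x y =>
    have hxy : S.Adj x y := S.mem_edgeSet.mp he
    obtain ⟨p⟩ := hconn.preconnected y i
    have h1 : cpHomCount H cH (CFI S (fun _ => 0)) Sigma.fst =
        cpHomCount H cH (CFI S (chi s(i, j))) Sigma.fst := by
      apply cpHom_congr
      intro u v huv
      have hne : s(cH u, cH v) ≠ s(i, j) := by
        intro heq
        rw [Sym2.eq_iff] at heq
        rcases heq with ⟨h1, h2⟩ | ⟨h1, h2⟩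
        · exact hmiss u v huv h1 h2
        · exact hmiss v u huv.symm h2 h1
      simp [chi, hne]
    have h2 : cpHomCount H cH (CFI S (chi s(x, y))) Sigma.fst =
        cpHomCount H cH (CFI S (chi s(i, j))) Sigma.fst :=
      cpHom_walk S H cH p j hij x hxy
    have h3 : (fun e => if e = s(x, y) then (1 : ZMod 2) else 0) = chi s(x, y) := rfl
    rw [h1, h3, h2]
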